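/- Let X be a finite dimensional real normed linear space and let T be a continuous linear operator on X whose norm attainment set M_T equals D ∪ (−D), where D is a closed connected subset of the unit sphere S_X. If A is a continuous linear operator on X with T ⊥_B A (in the operator norm), then there exists x ∈ D such that Tx ⊥_B Ax. -/

import Mathlib

/-- Birkhoff-James orthogonality: `x ⊥_B y` iff `‖x + λ y‖ ≥ ‖x‖` for all real `λ`. -/
def BJOrth {X : Type*} [NormedAddCommGroup X] [NormedSpace ℝ X] (x y : X) : Prop :=
  ∀ l : ℝ, ‖x‖ ≤ ‖x + l • y‖

/-- The norm attainment set `M_T` of a continuous linear operator `T`. -/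
def normAttainSet {X : Type*} [NormedAddCommGroup X] [NormedSpace ℝ X]
    (T : X →L[ℝ] X) : Set X :=
  {x : X | ‖x‖ = 1 ∧ ‖T x‖ = ‖T‖}


open Filter Topology


/-- convexity-type monotonicity of `λ ↦ ‖u + λ v‖`. -/
lemma norm_add_smul_mono {X : Type*} [NormedAddCommGroup X] [NormedSpace ℝ X]
    (u v : X) {e l : ℝ} (he : 0 < e) (hel : e ≤ l) (h : ‖u‖ ≤ ‖u + e • v‖) :
    ‖u + e • v‖ ≤ ‖u + l • v‖ := by
  have hl : 0 < l := he.trans_le hel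
  set t : ℝ := e / l with ht
  have ht0 : 0 < t := div_pos he hl
  have ht1 : t ≤ 1 := (div_le_one hl).mpr hel
  have key : u + e • v = (1 - t) • u + t • (u + l • v) := by
    have : t * l = e := div_mul_cancel₀ e hl.ne'
    rw [smul_add, smul_smul, this]
    module
  have hnorm : ‖u + e • v‖ ≤ (1 - t) * ‖u‖ + t * ‖u + l • v‖ := by
    calc ‖u + e • v‖ = ‖(1 - t) • u + t • (u + l • v)‖ := by rw [← key]
      _ ≤ ‖(1 - t) • u‖ + ‖t • (u + l • v)‖ := norm_add_le _ _
      _ = (1 - t) * ‖u‖ + t * ‖u + l • v‖ := by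
          rw [norm_smul, norm_smul, Real.norm_eq_abs, Real.norm_eq_abs,
            abs_of_nonneg (by linarith), abs_of_nonneg ht0.le]
  nlinarith [h]

/-- norm attainment in finite dimensions (given the space is nontrivial). -/
lemma exists_norm_attain {X : Type*} [NormedAddCommGroup X] [NormedSpace ℝ X]
    [FiniteDimensional ℝ X] (S : X →L[ℝ] X) (x₀ : X) (hx₀ : ‖x₀‖ = 1) :
    ∃ x, ‖x‖ = 1 ∧ ‖S x‖ = ‖S‖ := by
  have hcomp : IsCompact (Metric.sphere (0 : X) 1) := isCompact_sphere 0 1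
  have hne : (Metric.sphere (0 : X) 1).Nonempty := ⟨x₀, by simp [hx₀]⟩
  obtain ⟨x, hx, hmax⟩ := hcomp.exists_isMaxOn hne
    ((continuous_norm.comp S.continuous).continuousOn)
  have hx1 : ‖x‖ = 1 := by simpa using hx
  refine ⟨x, hx1, le_antisymm (by simpa [hx1] using S.le_opNorm x) ?_⟩
  apply S.opNorm_le_bound (norm_nonneg _)
  intro y
  rcases eq_or_ne y 0 with rfl | hy
  · simp
  · have hy' : ‖y‖ ≠ 0 := norm_ne_zero_iff.mpr hy
    have hmem : (‖y‖⁻¹ • y) ∈ Metric.sphere (0 : X) 1 := by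
      simp [norm_smul, abs_of_nonneg (norm_nonneg y), inv_mul_cancel₀ hy']
    have h := hmax hmem
    simp only [Set.mem_setOf_eq, Function.comp_apply, map_smul, norm_smul, Real.norm_eq_abs,
      abs_inv, abs_of_nonneg (norm_nonneg y)] at h
    have hpos : 0 < ‖y‖ := (norm_nonneg y).lt_of_ne' hy'
    calc ‖S y‖ = ‖y‖ * (‖y‖⁻¹ * ‖S y‖) := by field_simp
      _ ≤ ‖y‖ * ‖S x‖ := by
          exact mul_le_mul_of_nonneg_left h (norm_nonneg y)
      _ = ‖S x‖ * ‖y‖ := mul_comm _ _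

lemma exists_halfline {X : Type*} [NormedAddCommGroup X] [NormedSpace ℝ X]
    [FiniteDimensional ℝ X] (T A : X →L[ℝ] X) (x₀ : X) (hx₀ : ‖x₀‖ = 1)
    (hTA : BJOrth T A) :
    ∃ x, ‖x‖ = 1 ∧ ‖T x‖ = ‖T‖ ∧ ∀ l ≥ (0:ℝ), ‖T‖ ≤ ‖T x + l • A x‖ := by
  set e : ℕ → ℝ := fun n => 1 / (n + 1) with he
  have hepos : ∀ n, 0 < e n := fun n => by positivity
  choose u hu1 hu2 using fun n => exists_norm_attain (T + e n • A) x₀ hx₀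
  have hkey : ∀ n, ‖T‖ ≤ ‖T (u n) + e n • A (u n)‖ := by
    intro n
    calc ‖T‖ ≤ ‖T + e n • A‖ := hTA (e n)
      _ = ‖(T + e n • A) (u n)‖ := (hu2 n).symm
      _ = ‖T (u n) + e n • A (u n)‖ := by
          simp [ContinuousLinearMap.add_apply]
  have hmem : ∀ n, u n ∈ Metric.sphere (0 : X) 1 := fun n => by simp [hu1 n]
  obtain ⟨x, hx, φ, hφ, hconv⟩ := (isCompact_sphere (0 : X) 1).tendsto_subseq hmem
  have hx1 : ‖x‖ = 1 := by simpa using hx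
  have he0 : Tendsto (fun n => e (φ n)) atTop (𝓝 0) := by
    have h1 : Tendsto e atTop (𝓝 0) := by
      simpa [he] using tendsto_one_div_add_atTop_nhds_zero_nat (𝕜 := ℝ)
    exact h1.comp hφ.tendsto_atTop
  have hTcont : Tendsto (fun n => T (u (φ n))) atTop (𝓝 (T x)) :=
    (T.continuous.tendsto x).comp hconv
  have hAcont : Tendsto (fun n => A (u (φ n))) atTop (𝓝 (A x)) :=
    (A.continuous.tendsto x).comp hconv
  have hTx : ‖T‖ ≤ ‖T x‖ := by
    have hlim : Tendsto (fun n => ‖T (u (φ n)) + e (φ n) • A (u (φ n))‖) atTop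
        (𝓝 ‖T x + (0:ℝ) • A x‖) := (hTcont.add (he0.smul hAcont)).norm
    rw [zero_smul, add_zero] at hlim
    exact ge_of_tendsto hlim (Eventually.of_forall fun n => hkey (φ n))
  have hTx' : ‖T x‖ = ‖T‖ := le_antisymm (by simpa [hx1] using T.le_opNorm x) hTx
  refine ⟨x, hx1, hTx', ?_⟩
  intro l hl
  rcases hl.eq_or_lt with rfl | hl
  · simpa using hTx
  · have hev : ∀ᶠ n in atTop, ‖T‖ ≤ ‖T (u (φ n)) + l • A (u (φ n))‖ := by
      have hlt : ∀ᶠ n in atTop, e (φ n) < l := he0.eventually (eventually_lt_nhds hl)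
      filter_upwards [hlt] with n hn
      have h1 := hkey (φ n)
      have h2 : ‖T (u (φ n))‖ ≤ ‖T (u (φ n)) + e (φ n) • A (u (φ n))‖ :=
        le_trans (by simpa [hu1] using T.le_opNorm (u (φ n))) h1
      exact h1.trans (norm_add_smul_mono _ _ (hepos (φ n)) hn.le h2)
    have hlim : Tendsto (fun n => ‖T (u (φ n)) + l • A (u (φ n))‖) atTop
        (𝓝 ‖T x + l • A x‖) := (hTcont.add (hAcont.const_smul l)).norm
    exact ge_of_tendsto hlim hev

theorem sain_paul_corollary {X : Type*} [NormedAddCommGroup X] [NormedSpace ℝ X]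
    [FiniteDimensional ℝ X] (T A : X →L[ℝ] X) (D : Set X)
    (hD_sphere : D ⊆ Metric.sphere (0 : X) 1) (hD_closed : IsClosed D)
    (hD_conn : IsConnected D) (hMT : normAttainSet T = D ∪ (-D))
    (hTA : BJOrth T A) :
    ∃ x ∈ D, BJOrth (T x) (A x) := by
  -- a unit vector
  obtain ⟨d, hd⟩ := hD_conn.nonempty
  have hd1 : ‖d‖ = 1 := by simpa using hD_sphere hd
  -- every point of D attains the norm
  have hDnorm : ∀ z ∈ D, ‖T z‖ = ‖T‖ := by
    intro z hz
    have : z ∈ normAttainSet T := by rw [hMT]; exact Or.inl hz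
    exact this.2
  -- the two closed sets
  set P : Set X := {z | ∀ l ≥ (0:ℝ), ‖T‖ ≤ ‖T z + l • A z‖} with hP
  set N : Set X := {z | ∀ l ≤ (0:ℝ), ‖T‖ ≤ ‖T z + l • A z‖} with hN
  have hPc : IsClosed P := by
    have : P = ⋂ l ∈ Set.Ici (0:ℝ), {z | ‖T‖ ≤ ‖T z + l • A z‖} := by
      ext z; simp [hP, Set.mem_iInter]
    rw [this]
    exact isClosed_biInter fun l _ =>
      isClosed_le continuous_const ((T.continuous.add (A.continuous.const_smul l)).norm)
  have hNc : IsClosed N := by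
    have : N = ⋂ l ∈ Set.Iic (0:ℝ), {z | ‖T‖ ≤ ‖T z + l • A z‖} := by
      ext z; simp [hN, Set.mem_iInter]
    rw [this]
    exact isClosed_biInter fun l _ =>
      isClosed_le continuous_const ((T.continuous.add (A.continuous.const_smul l)).norm)
  -- D ⊆ P ∪ N  (convexity argument)
  have hcover : D ⊆ P ∪ N := by
    intro z hz
    by_contra hcon
    simp only [Set.mem_union, not_or] at hcon
    obtain ⟨hnP, hnN⟩ := hcon
    simp only [hP, hN, Set.mem_setOf_eq, not_forall] at hnP hnN
    obtain ⟨l, hl0, hlbad⟩ := hnP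
    obtain ⟨m, hm0, hmbad⟩ := hnN
    push_neg at hlbad hmbad
    have hzn := hDnorm z hz
    have hlpos : 0 < l := by
      rcases hl0.eq_or_lt with rfl | h
      · exfalso; simp only [zero_smul, add_zero] at hlbad; linarith [hzn.ge, hlbad]
      · exact h
    have hmneg : m < 0 := by
      rcases hm0.eq_or_lt with rfl | h
      · exfalso; simp only [zero_smul, add_zero] at hmbad; linarith [hzn.ge, hmbad]
      · exact h
    set a : ℝ := l / (l - m) with ha
    set b : ℝ := -m / (l - m) with hb
    have hlm : 0 < l - m := by linarith
    have ha0 : 0 < a := div_pos hlpos hlm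
    have hb0 : 0 < b := div_pos (by linarith) hlm
    have hab : a + b = 1 := by
      rw [ha, hb, ← add_div]
      exact div_self hlm.ne'
    have key : T z = a • (T z + m • A z) + b • (T z + l • A z) := by
      have h1 : a * m + b * l = 0 := by
        rw [ha, hb]; field_simp; ring
      have h2 : a + b = 1 := hab
      rw [smul_add, smul_add, smul_smul, smul_smul]
      rw [show a • T z + (a * m) • A z + (b • T z + (b * l) • A z)
          = (a + b) • T z + (a * m + b * l) • A z by module]
      rw [h1, h2, one_smul, zero_smul, add_zero]
    have : ‖T z‖ < ‖T‖ := by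
      calc ‖T z‖ = ‖a • (T z + m • A z) + b • (T z + l • A z)‖ := by rw [← key]
        _ ≤ a * ‖T z + m • A z‖ + b * ‖T z + l • A z‖ := by
            refine (norm_add_le _ _).trans ?_
            rw [norm_smul, norm_smul, Real.norm_eq_abs, Real.norm_eq_abs,
              abs_of_pos ha0, abs_of_pos hb0]
        _ < a * ‖T‖ + b * ‖T‖ := by
            apply add_lt_add
            · exact mul_lt_mul_of_pos_left hmbad ha0
            · exact mul_lt_mul_of_pos_left hlbad hb0
        _ = ‖T‖ := by rw [← add_mul, hab, one_mul]
    linarith [hzn.ge, this]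
  -- D ∩ P nonempty
  have hPne : (D ∩ P).Nonempty := by
    obtain ⟨x, hx1, hxT, hxh⟩ := exists_halfline T A d hd1 hTA
    have hxM : x ∈ D ∪ (-D) := by rw [← hMT]; exact ⟨hx1, hxT⟩
    rcases hxM with hx | hx
    · exact ⟨x, hx, hxh⟩
    · refine ⟨-x, by simpa using hx, ?_⟩
      intro l hl
      have : T (-x) + l • A (-x) = -(T x + l • A x) := by
        simp [map_neg, smul_neg]; abel
      rw [this, norm_neg]
      exact hxh l hl
  -- D ∩ N nonempty
  have hNne : (D ∩ N).Nonempty := by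
    have hTA' : BJOrth T (-A) := by
      intro l
      have := hTA (-l)
      rwa [show T + -l • A = T + l • -A by rw [smul_neg, neg_smul]] at this
    obtain ⟨x, hx1, hxT, hxh⟩ := exists_halfline T (-A) d hd1 hTA'
    have hxN : ∀ l ≤ (0:ℝ), ‖T‖ ≤ ‖T x + l • A x‖ := by
      intro l hl
      have := hxh (-l) (by linarith)
      rwa [show T x + -l • (-A) x = T x + l • A x by
        simp [smul_neg, neg_smul]] at this
    have hxM : x ∈ D ∪ (-D) := by rw [← hMT]; exact ⟨hx1, hxT⟩
    rcases hxM with hx | hx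
    · exact ⟨x, hx, hxN⟩
    · refine ⟨-x, by simpa using hx, ?_⟩
      intro l hl
      have : T (-x) + l • A (-x) = -(T x + l • A x) := by
        simp [map_neg, smul_neg]; abel
      rw [this, norm_neg]
      exact hxN l hl
  -- connectedness gives a point in D ∩ P ∩ N
  have hmeet : (D ∩ (P ∩ N)).Nonempty := by
    by_contra hcon
    rw [Set.not_nonempty_iff_eq_empty] at hcon
    have hsub : D ⊆ Pᶜ ∪ Nᶜ := by
      intro z hz
      by_contra h
      simp only [Set.mem_union, Set.mem_compl_iff, not_or, not_not] at h
      exact Set.eq_empty_iff_forall_notMem.mp hcon z ⟨hz, h.1, h.2⟩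
    have hU : (D ∩ Pᶜ).Nonempty := by
      obtain ⟨y, hyD, hyN⟩ := hNne
      refine ⟨y, hyD, fun hyP => ?_⟩
      exact Set.eq_empty_iff_forall_notMem.mp hcon y ⟨hyD, hyP, hyN⟩
    have hV : (D ∩ Nᶜ).Nonempty := by
      obtain ⟨y, hyD, hyP⟩ := hPne
      refine ⟨y, hyD, fun hyN => ?_⟩
      exact Set.eq_empty_iff_forall_notMem.mp hcon y ⟨hyD, hyP, hyN⟩
    obtain ⟨z, hzD, hzP, hzN⟩ := hD_conn.isPreconnected Pᶜ Nᶜ hPc.isOpen_compl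
      hNc.isOpen_compl hsub hU hV
    rcases hcover hzD with h | h
    · exact hzP h
    · exact hzN h
  obtain ⟨z, hzD, hzP, hzN⟩ := hmeet
  refine ⟨z, hzD, ?_⟩
  intro l
  rw [hDnorm z hzD]
  rcases le_or_gt 0 l with h | h
  · exact hzP l h
  · exact hzN l h.le
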